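/- arXiv:2604.20426 — 2 statements merged into one kernel-verified Lean document; each statement's English description precedes it below -/
import Mathlib

section
/- Let G be the semidirect product (ZMod 3 × ZMod 3) ⋊ ZMod 4, where the generator 1 of ZMod 4 acts by the automorphism (x, y) ↦ (−y, x). If V is a nonzero finite-dimensional complex vector space and ρ : G → GL(V) is a representation that is irreducible (i.e., the only ρ(G)-invariant subspaces of V are 0 and V), then dim_ℂ V = 1 or dim_ℂ V = 4. -/
/-- The order-4 automorphism `(x, y) ↦ (-y, x)` of `ZMod 3 × ZMod 3`,
viewed as an automorphism of the corresponding multiplicative group. -/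
def rotAut : MulAut (Multiplicative (ZMod 3 × ZMod 3)) where
  toFun p := Multiplicative.ofAdd (-(Multiplicative.toAdd p).2, (Multiplicative.toAdd p).1)
  invFun p := Multiplicative.ofAdd ((Multiplicative.toAdd p).2, -(Multiplicative.toAdd p).1)
  left_inv p := by simp
  right_inv p := by simp
  map_mul' p q := by
    simp only [toAdd_mul, Prod.fst_add, Prod.snd_add, ← ofAdd_add]
    congr 1
    simp [Prod.ext_iff, neg_add, add_comm]

/-- The homomorphism `ZMod n → M` sending `1` to a fixed element `ψ` with `ψ ^ n = 1`. -/
def zmodPowHom (n : ℕ) [NeZero n] {M : Type*} [Monoid M] (ψ : M) (h : ψ ^ n = 1) :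
    Multiplicative (ZMod n) →* M where
  toFun k := ψ ^ (Multiplicative.toAdd k).val
  map_one' := by simp
  map_mul' a b := by
    have key : ∀ m : ℕ, ψ ^ (m % n) = ψ ^ m := by
      intro m
      conv_rhs => rw [← Nat.mod_add_div m n]
      rw [pow_add, pow_mul, h, one_pow, mul_one]
    show ψ ^ (Multiplicative.toAdd (a * b)).val = _
    rw [toAdd_mul, ZMod.val_add, key, pow_add]

lemma rotAut_pow_four : rotAut ^ 4 = 1 := by
  ext p
  all_goals
    rw [pow_succ, pow_succ, pow_succ, pow_one]
    simp only [MulAut.mul_apply, MulAut.one_apply]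
    simp [rotAut]

/-- The group `(ZMod 3 × ZMod 3) ⋊ ZMod 4`, where the generator `1` of `ZMod 4`
acts by the automorphism `(x, y) ↦ (-y, x)`; this is the group with GAP ID `[36,9]`. -/
abbrev G369 : Type :=
  SemidirectProduct (Multiplicative (ZMod 3 × ZMod 3)) (Multiplicative (ZMod 4))
    (zmodPowHom 4 rotAut rotAut_pow_four)

section AuxArith

lemma cube_abs_one {z : ℂ} (h : z ^ 3 = 1) : ‖z‖ = 1 := by
  have h0 : ‖z‖ ^ 3 = 1 := by
    rw [← norm_pow, h, norm_one]
  nlinarith [norm_nonneg z, sq_nonneg (‖z‖ - 1), sq_nonneg (‖z‖ + 1)]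

lemma cube_sub_mul {z w : ℂ} (hz : z ^ 3 = 1) (hw : w ^ 3 = 1) (hzw : z ≠ w) :
    (z - w) * (z ^ 2 - w ^ 2) = 3 := by
  have hr1 : z * w ^ 2 ≠ 1 := by
    intro h
    apply hzw
    calc z = z * w ^ 3 := by rw [hw, mul_one]
    _ = z * w ^ 2 * w := by ring
    _ = w := by rw [h, one_mul]
  have hq : (z * w ^ 2) ^ 2 + z * w ^ 2 + 1 = 0 := by
    have h3 : (z * w ^ 2 - 1) * ((z * w ^ 2) ^ 2 + z * w ^ 2 + 1) = 0 := by
      have : (z * w ^ 2) ^ 3 = 1 := by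
        rw [mul_pow, hz, ← pow_mul, mul_comm 2 3, pow_mul, hw, one_pow, one_mul]
      linear_combination this
    rcases mul_eq_zero.mp h3 with h | h
    · exact absurd (by linear_combination h) hr1
    · exact h
  linear_combination hz + hw - hq + (z ^ 2 * w) * hw

lemma cube_abs_sub {z w : ℂ} (hz : z ^ 3 = 1) (hw : w ^ 3 = 1) (hzw : z ≠ w) :
    ‖z - w‖ = Real.sqrt 3 := by
  have hz0 : z ≠ 0 := by rintro rfl; simp at hz
  have hcz : (starRingEnd ℂ) z = z ^ 2 := by
    have h1 : z * (starRingEnd ℂ) z = z * z ^ 2 := by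
      rw [Complex.mul_conj, ← pow_succ', hz]
      norm_cast
      have := cube_abs_one hz
      rw [Complex.normSq_eq_norm_sq, this]; norm_num
    exact mul_left_cancel₀ hz0 h1
  have hcw : (starRingEnd ℂ) w = w ^ 2 := by
    have hw0 : w ≠ 0 := by rintro rfl; simp at hw
    have h1 : w * (starRingEnd ℂ) w = w * w ^ 2 := by
      rw [Complex.mul_conj, ← pow_succ', hw]
      norm_cast
      have := cube_abs_one hw
      rw [Complex.normSq_eq_norm_sq, this]; norm_num
    exact mul_left_cancel₀ hw0 h1
  have key : ((Complex.normSq (z - w) : ℝ) : ℂ) = 3 := by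
    rw [← Complex.mul_conj, map_sub, hcz, hcw]
    exact cube_sub_mul hz hw hzw
  have h3 : Complex.normSq (z - w) = 3 := by exact_mod_cast key
  rw [Complex.norm_def, h3]

lemma key5 {a b c d : ℂ} (ha : a ^ 3 = 1) (hb : b ^ 3 = 1) (hc : c ^ 3 = 1) (hd : d ^ 3 = 1)
    (h : a + 5 * b = c + 5 * d) : a = c ∧ b = d := by
  by_cases hbd : b = d
  · subst hbd
    exact ⟨by linear_combination h, rfl⟩
  · exfalso
    have h1 : a - c = 5 * (d - b) := by linear_combination h
    have h2 : ‖a - c‖ = 5 * Real.sqrt 3 := by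
      rw [h1, norm_mul, cube_abs_sub hd hb (Ne.symm hbd)]
      norm_num
    have h3 : ‖a - c‖ ≤ 2 := by
      calc ‖a - c‖ ≤ ‖a‖ + ‖c‖ :=
            norm_sub_le a c
      _ = 2 := by rw [cube_abs_one ha, cube_abs_one hc]; norm_num
    have hs : Real.sqrt 3 ^ 2 = 3 := Real.sq_sqrt (by norm_num)
    nlinarith [Real.sqrt_nonneg 3]

lemma cube_sq_self {x : ℂ} (h3 : x ^ 3 = 1) (h : x * x = x) : x = 1 := by
  linear_combination h3 - (x + 1) * h

lemma cube_sq_one {x : ℂ} (h3 : x ^ 3 = 1) (h : x * x = 1) : x = 1 := by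
  linear_combination h3 - x * h

end AuxArith

section AuxGroup

open SemidirectProduct Multiplicative

noncomputable def g369a : G369 := inl (ofAdd ((1 : ZMod 3), (0 : ZMod 3)))
noncomputable def g369b : G369 := inl (ofAdd ((0 : ZMod 3), (1 : ZMod 3)))
noncomputable def g369t : G369 := inr (ofAdd (1 : ZMod 4))

lemma g369a_pow3 : g369a ^ 3 = 1 := by
  ext <;> simp [g369a] <;> decide

lemma g369b_pow3 : g369b ^ 3 = 1 := by
  ext <;> simp [g369b] <;> decide

lemma g369t_pow4 : g369t ^ 4 = 1 := by
  ext <;> simp [g369t] <;> decide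

lemma g369_comm : g369a * g369b = g369b * g369a := by
  ext <;> simp [g369a, g369b] <;> decide

lemma g369_rel1 : g369a * g369t = g369t * g369b ^ 2 := by
  ext <;> simp [g369a, g369b, g369t, zmodPowHom, rotAut] <;> decide

lemma g369_rel2 : g369b * g369t = g369t * g369a := by
  ext <;> simp [g369a, g369b, g369t, zmodPowHom, rotAut] <;> decide

lemma g369_decomp (g : G369) :
    g = g369a ^ ((toAdd g.left).1.val) * g369b ^ ((toAdd g.left).2.val)
        * g369t ^ ((toAdd g.right).val) := by
  have hga : g369a ^ ((toAdd g.left).1.val) = inl (ofAdd ((toAdd g.left).1, 0)) := by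
    rw [g369a, ← map_pow, ← ofAdd_nsmul]
    congr 2
    rw [Prod.ext_iff]
    constructor
    · simp [nsmul_eq_mul, ZMod.natCast_val, ZMod.cast_id]
    · simp
  have hgb : g369b ^ ((toAdd g.left).2.val) = inl (ofAdd (0, (toAdd g.left).2)) := by
    rw [g369b, ← map_pow, ← ofAdd_nsmul]
    congr 2
    rw [Prod.ext_iff]
    constructor
    · simp
    · simp [nsmul_eq_mul, ZMod.natCast_val, ZMod.cast_id]
  have hgt : g369t ^ ((toAdd g.right).val) = inr (ofAdd (toAdd g.right)) := by
    rw [g369t, ← map_pow, ← ofAdd_nsmul]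
    congr 2
    simp [nsmul_eq_mul, ZMod.natCast_val, ZMod.cast_id]
  rw [hga, hgb, hgt, ← map_mul, ← ofAdd_add]
  have : ((toAdd g.left).1, (0 : ZMod 3)) + ((0 : ZMod 3), (toAdd g.left).2) = toAdd g.left := by
    ext <;> simp
  rw [this, ofAdd_toAdd, ofAdd_toAdd, inl_left_mul_inr_right]

/-- If a linear map sends the generators of a span into the span, it preserves the span. -/
lemma stab_span {V : Type} [AddCommGroup V] [Module ℂ V] {f : V →ₗ[ℂ] V} {s : Set V}
    (h : ∀ x ∈ s, f x ∈ Submodule.span ℂ s) :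
    ∀ w ∈ Submodule.span ℂ s, f w ∈ Submodule.span ℂ s := by
  intro w hw
  have h1 : Submodule.map f (Submodule.span ℂ s) ≤ Submodule.span ℂ s := by
    rw [Submodule.map_span, Submodule.span_le]
    rintro y ⟨x, hx, rfl⟩
    exact h x hx
  exact h1 (Submodule.mem_map_of_mem hw)

end AuxGroup

/-- Every irreducible complex representation of `(ZMod 3 × ZMod 3) ⋊ ZMod 4`
(GAP ID `[36,9]`) has dimension `1` or `4`. -/
theorem irrep_dim_G369 (V : Type) [AddCommGroup V] [Module ℂ V]
    [FiniteDimensional ℂ V] [Nontrivial V]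
    (ρ : G369 →* LinearMap.GeneralLinearGroup ℂ V)
    (hirr : ∀ W : Submodule ℂ V,
      (∀ (g : G369), ∀ v ∈ W, ((ρ g : V →ₗ[ℂ] V) v) ∈ W) → W = ⊥ ∨ W = ⊤) :
    Module.finrank ℂ V = 1 ∨ Module.finrank ℂ V = 4 := by
  classical
  set ρE : G369 →* (V →ₗ[ℂ] V) := (Units.coeHom (V →ₗ[ℂ] V)).comp ρ with hρE
  set a : V →ₗ[ℂ] V := ρE g369a with ha_def
  set b : V →ₗ[ℂ] V := ρE g369b with hb_def
  set t : V →ₗ[ℂ] V := ρE g369t with ht_def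
  have ha3 : a ^ 3 = 1 := by rw [ha_def, ← map_pow, g369a_pow3, map_one]
  have hb3 : b ^ 3 = 1 := by rw [hb_def, ← map_pow, g369b_pow3, map_one]
  have ht4 : t ^ 4 = 1 := by rw [ht_def, ← map_pow, g369t_pow4, map_one]
  have hab : a * b = b * a := by
    rw [ha_def, hb_def, ← map_mul, ← map_mul, g369_comm]
  have hat : a * t = t * b ^ 2 := by
    rw [ha_def, hb_def, ht_def, ← map_pow, ← map_mul, ← map_mul, g369_rel1]
  have hbt : b * t = t * a := by
    rw [ha_def, hb_def, ht_def, ← map_mul, ← map_mul, g369_rel2]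
  have hdec : ∀ g : G369, (ρ g : V →ₗ[ℂ] V)
      = a ^ ((Multiplicative.toAdd g.left).1.val) * b ^ ((Multiplicative.toAdd g.left).2.val)
        * t ^ ((Multiplicative.toAdd g.right).val) := by
    intro g
    have h0 : (ρ g : V →ₗ[ℂ] V) = ρE g := rfl
    rw [h0]
    conv_lhs => rw [g369_decomp g]
    simp only [map_mul, map_pow]
    rfl
  -- applied versions of the relations
  have hat' : ∀ x : V, a (t x) = t (b (b x)) := by
    intro x
    have h := DFunLike.congr_fun hat x
    simpa only [Module.End.mul_apply, pow_two] using h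
  have hbt' : ∀ x : V, b (t x) = t (a x) := by
    intro x
    have h := DFunLike.congr_fun hbt x
    simpa only [Module.End.mul_apply] using h
  -- a submodule invariant under a, b, t is invariant under the whole group
  have stab : ∀ (W : Submodule ℂ V), (∀ w ∈ W, a w ∈ W) → (∀ w ∈ W, b w ∈ W) →
      (∀ w ∈ W, t w ∈ W) → ∀ g : G369, ∀ w ∈ W, (ρ g : V →ₗ[ℂ] V) w ∈ W := by
    intro W hA hB hT g w hw
    have hpow : ∀ (f : V →ₗ[ℂ] V), (∀ w ∈ W, f w ∈ W) → ∀ n : ℕ, ∀ w ∈ W, (f ^ n) w ∈ W := by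
      intro f hf n
      induction n with
      | zero => intro w hw; simpa using hw
      | succ n ih =>
          intro w hw
          rw [pow_succ, Module.End.mul_apply]
          exact ih _ (hf w hw)
    rw [hdec g, Module.End.mul_apply, Module.End.mul_apply]
    exact hpow _ hA _ _ (hpow _ hB _ _ (hpow _ hT _ _ hw))
  -- the common fixed space of a and b
  set F : Submodule ℂ V := Module.End.eigenspace a 1 ⊓ Module.End.eigenspace b 1 with hF_def
  have hFmem : ∀ x : V, x ∈ F ↔ a x = x ∧ b x = x := by
    intro x
    rw [hF_def, Submodule.mem_inf, Module.End.mem_eigenspace_iff,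
      Module.End.mem_eigenspace_iff, one_smul]
  have hFinv : ∀ g : G369, ∀ w ∈ F, (ρ g : V →ₗ[ℂ] V) w ∈ F := by
    apply stab
    · intro w hw
      obtain ⟨h1, h2⟩ := (hFmem w).mp hw
      rw [h1]; exact hw
    · intro w hw
      obtain ⟨h1, h2⟩ := (hFmem w).mp hw
      rw [h2]; exact hw
    · intro w hw
      obtain ⟨h1, h2⟩ := (hFmem w).mp hw
      refine (hFmem (t w)).mpr ⟨?_, ?_⟩
      · rw [hat' w, h2, h2]
      · rw [hbt' w, h1]
  rcases hirr F hFinv with hbot | htop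
  · -- F = ⊥ : the representation has dimension 4
    right
    obtain ⟨α, hα⟩ := Module.End.exists_eigenvalue a
    have hbE : ∀ x ∈ Module.End.eigenspace a α, b x ∈ Module.End.eigenspace a α := by
      intro x hx
      rw [Module.End.mem_eigenspace_iff] at hx ⊢
      have hcom : a (b x) = b (a x) := by
        rw [← Module.End.mul_apply, ← Module.End.mul_apply, hab]
      rw [hcom, hx, map_smul]
    haveI : Nontrivial (Module.End.eigenspace a α) :=
      Submodule.nontrivial_iff_ne_bot.mpr hα
    obtain ⟨β, hβ⟩ := Module.End.exists_eigenvalue (LinearMap.restrict b hbE)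
    obtain ⟨u, hu⟩ := hβ.exists_hasEigenvector
    set v : V := (u : V) with hv_def
    have hv0 : v ≠ 0 := fun h => hu.2 (Subtype.ext h)
    have hav : a v = α • v := Module.End.mem_eigenspace_iff.mp u.2
    have hbv : b v = β • v := by
      have h1 := congrArg Subtype.val hu.apply_eq_smul
      simpa only [LinearMap.restrict_apply, Submodule.coe_smul] using h1
    -- the eigenvalues are cube roots of unity
    have cube : ∀ (f : V →ₗ[ℂ] V) (γ : ℂ), f ^ 3 = 1 → f v = γ • v → γ ^ 3 = 1 := by
      intro f γ hf hfv
      have s1 : f (f v) = (γ * γ) • v := by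
        rw [hfv, map_smul, hfv, smul_smul]
      have s2 : f (f (f v)) = (γ * γ * γ) • v := by
        rw [s1, map_smul, hfv, smul_smul]
      have h1 : (f ^ 3) v = (γ * γ * γ) • v := by
        rw [pow_succ, pow_succ, pow_one, Module.End.mul_apply, Module.End.mul_apply, s2]
      rw [hf, Module.End.one_apply] at h1
      have h2 : (γ * γ * γ - 1) • v = 0 := by
        rw [sub_smul, one_smul, ← h1, sub_self]
      rcases smul_eq_zero.mp h2 with h | h
      · linear_combination h
      · exact absurd h hv0
    have hα3 : α ^ 3 = 1 := cube a α ha3 hav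
    have hβ3 : β ^ 3 = 1 := cube b β hb3 hbv
    have hne : ¬(α = 1 ∧ β = 1) := by
      rintro ⟨h1, h2⟩
      have hvF : v ∈ F := (hFmem v).mpr
        ⟨by rw [hav, h1, one_smul], by rw [hbv, h2, one_smul]⟩
      rw [hbot, Submodule.mem_bot] at hvF
      exact hv0 hvF
    -- auxiliary cube roots
    have hαα3 : (α * α) ^ 3 = 1 := by linear_combination (α ^ 3 + 1) * hα3
    have hββ3 : (β * β) ^ 3 = 1 := by linear_combination (β ^ 3 + 1) * hβ3
    -- double-application helpers
    have haa : ∀ (x : V) (γ : ℂ), a x = γ • x → a (a x) = (γ * γ) • x := by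
      intro x γ h; rw [h, map_smul, h, smul_smul]
    have hbb : ∀ (x : V) (γ : ℂ), b x = γ • x → b (b x) = (γ * γ) • x := by
      intro x γ h; rw [h, map_smul, h, smul_smul]
    -- the four vectors and their eigenvalues
    have e_a1 : a (t v) = (β * β) • t v := by rw [hat' v, hbb v β hbv, map_smul]
    have e_b1 : b (t v) = α • t v := by rw [hbt' v, hav, map_smul]
    have e_a2 : a (t (t v)) = (α * α) • t (t v) := by
      rw [hat' (t v), hbb _ α e_b1, map_smul]
    have e_b2 : b (t (t v)) = (β * β) • t (t v) := by
      rw [hbt' (t v), e_a1, map_smul]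
    have e_a3 : a (t (t (t v))) = β • t (t (t v)) := by
      rw [hat' (t (t v)), hbb _ (β * β) e_b2, map_smul,
        show (β * β) * (β * β) = β from by linear_combination β * hβ3]
    have e_b3 : b (t (t (t v))) = (α * α) • t (t (t v)) := by
      rw [hbt' (t (t v)), e_a2, map_smul]
    have e_t3 : t (t (t (t v))) = v := by
      have h4 : (t ^ 4) v = t (t (t (t v))) := by
        rw [pow_succ, pow_succ, pow_succ, pow_one]
        simp only [Module.End.mul_apply]
      rw [ht4, Module.End.one_apply] at h4
      exact h4.symm
    -- t is injective
    have htinj : ∀ x : V, x ≠ 0 → t x ≠ 0 := by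
      intro x hx h0
      apply hx
      have h1 : ρE (g369t⁻¹) * t = 1 := by
        rw [ht_def, ← map_mul, inv_mul_cancel, map_one]
      have h2 := DFunLike.congr_fun h1 x
      rw [Module.End.mul_apply, h0, map_zero, Module.End.one_apply] at h2
      exact h2.symm
    have hv1 : t v ≠ 0 := htinj v hv0
    have hv2 : t (t v) ≠ 0 := htinj _ hv1
    have hv3 : t (t (t v)) ≠ 0 := htinj _ hv2
    -- the four eigenvalues of a + 5b are pairwise distinct
    set μ : Fin 4 → ℂ := ![α + 5 * β, β * β + 5 * α, α * α + 5 * (β * β), β + 5 * (α * α)]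
      with hμ_def
    have d01 : α + 5 * β ≠ β * β + 5 * α := by
      intro h
      obtain ⟨h1, h2⟩ := key5 hα3 hβ3 hββ3 hα3 h
      have hβ1 : β = 1 := cube_sq_self hβ3 (by rw [← h1, ← h2])
      exact hne ⟨by rw [← h2, hβ1], hβ1⟩
    have d02 : α + 5 * β ≠ α * α + 5 * (β * β) := by
      intro h
      obtain ⟨h1, h2⟩ := key5 hα3 hβ3 hαα3 hββ3 h
      exact hne ⟨cube_sq_self hα3 h1.symm, cube_sq_self hβ3 h2.symm⟩
    have d03 : α + 5 * β ≠ β + 5 * (α * α) := by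
      intro h
      obtain ⟨h1, h2⟩ := key5 hα3 hβ3 hβ3 hαα3 h
      -- h1 : α = β, h2 : β = α * α
      have hβ1 : β = 1 := cube_sq_self hβ3 (by rw [← h1, ← h2, h1])
      exact hne ⟨by rw [h1, hβ1], hβ1⟩
    have d12 : β * β + 5 * α ≠ α * α + 5 * (β * β) := by
      intro h
      obtain ⟨h1, h2⟩ := key5 hββ3 hα3 hαα3 hββ3 h
      -- h1 : β*β = α*α, h2 : α = β*β
      have hα1 : α = 1 := cube_sq_self hα3 (by rw [← h1, ← h2])
      have hβ1 : β = 1 := cube_sq_one hβ3 (by rw [h1, hα1, one_mul])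
      exact hne ⟨hα1, hβ1⟩
    have d13 : β * β + 5 * α ≠ β + 5 * (α * α) := by
      intro h
      obtain ⟨h1, h2⟩ := key5 hββ3 hα3 hβ3 hαα3 h
      -- h1 : β*β = β, h2 : α = α*α
      exact hne ⟨cube_sq_self hα3 h2.symm, cube_sq_self hβ3 h1⟩
    have d23 : α * α + 5 * (β * β) ≠ β + 5 * (α * α) := by
      intro h
      obtain ⟨h1, h2⟩ := key5 hαα3 hββ3 hβ3 hαα3 h
      -- h1 : α*α = β, h2 : β*β = α*α
      have hβ1 : β = 1 := cube_sq_self hβ3 (by rw [h2, h1])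
      have hα1 : α = 1 := cube_sq_one hα3 (by rw [h1, hβ1])
      exact hne ⟨hα1, hβ1⟩
    have hμinj : Function.Injective μ := by
      intro i j hij
      fin_cases i <;> fin_cases j <;>
        simp only [hμ_def, Matrix.cons_val_zero, Matrix.cons_val_one, Matrix.head_cons,
          Matrix.cons_val_two, Matrix.tail_cons, Matrix.cons_val_three] at hij <;>
        first
          | rfl
          | exact absurd hij d01 | exact absurd hij.symm d01
          | exact absurd hij d02 | exact absurd hij.symm d02
          | exact absurd hij d03 | exact absurd hij.symm d03
          | exact absurd hij d12 | exact absurd hij.symm d12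
          | exact absurd hij d13 | exact absurd hij.symm d13
          | exact absurd hij d23 | exact absurd hij.symm d23
    set vecs : Fin 4 → V := ![v, t v, t (t v), t (t (t v))] with hvecs_def
    set L : V →ₗ[ℂ] V := a + (5 : ℂ) • b with hL_def
    have happly : ∀ (x : V) (γ δ : ℂ), a x = γ • x → b x = δ • x → L x = (γ + 5 * δ) • x := by
      intro x γ δ h1 h2
      rw [hL_def, LinearMap.add_apply, LinearMap.smul_apply, h1, h2, smul_smul, ← add_smul]
    have heig : ∀ i, Module.End.HasEigenvector L (μ i) (vecs i) := by
      intro i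
      fin_cases i <;>
        refine ⟨Module.End.mem_eigenspace_iff.mpr ?_, ?_⟩ <;>
        simp only [hμ_def, hvecs_def, Matrix.cons_val_zero, Matrix.cons_val_one,
          Matrix.head_cons, Matrix.cons_val_two, Matrix.tail_cons, Matrix.cons_val_three]
      · exact happly v α β hav hbv
      · exact hv0
      · exact happly _ (β * β) α e_a1 e_b1
      · exact hv1
      · exact happly _ (α * α) (β * β) e_a2 e_b2
      · exact hv2
      · exact happly _ β (α * α) e_a3 e_b3
      · exact hv3
    have hind : LinearIndependent ℂ vecs :=
      Module.End.eigenvectors_linearIndependent' L μ hμinj vecs heig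
    -- the span of the four vectors is invariant
    have hmemW : ∀ i : Fin 4, vecs i ∈ Submodule.span ℂ (Set.range vecs) :=
      fun i => Submodule.subset_span (Set.mem_range_self i)
    have hgen : ∀ x ∈ Set.range vecs,
        a x ∈ Submodule.span ℂ (Set.range vecs) ∧
        b x ∈ Submodule.span ℂ (Set.range vecs) ∧
        t x ∈ Submodule.span ℂ (Set.range vecs) := by
      rintro x ⟨i, rfl⟩
      have hm : ∀ j : Fin 4, vecs j ∈ Submodule.span ℂ (Set.range vecs) := hmemW
      fin_cases i
      · refine ⟨?_, ?_, ?_⟩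
        · show a v ∈ _; rw [hav]; exact Submodule.smul_mem _ _ (hm 0)
        · show b v ∈ _; rw [hbv]; exact Submodule.smul_mem _ _ (hm 0)
        · show t v ∈ _; exact hm 1
      · refine ⟨?_, ?_, ?_⟩
        · show a (t v) ∈ _; rw [e_a1]; exact Submodule.smul_mem _ _ (hm 1)
        · show b (t v) ∈ _; rw [e_b1]; exact Submodule.smul_mem _ _ (hm 1)
        · show t (t v) ∈ _; exact hm 2
      · refine ⟨?_, ?_, ?_⟩
        · show a (t (t v)) ∈ _; rw [e_a2]; exact Submodule.smul_mem _ _ (hm 2)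
        · show b (t (t v)) ∈ _; rw [e_b2]; exact Submodule.smul_mem _ _ (hm 2)
        · show t (t (t v)) ∈ _; exact hm 3
      · refine ⟨?_, ?_, ?_⟩
        · show a (t (t (t v))) ∈ _; rw [e_a3]; exact Submodule.smul_mem _ _ (hm 3)
        · show b (t (t (t v))) ∈ _; rw [e_b3]; exact Submodule.smul_mem _ _ (hm 3)
        · show t (t (t (t v))) ∈ _; rw [e_t3]; exact hm 0
    have hWinv : ∀ g : G369, ∀ w ∈ Submodule.span ℂ (Set.range vecs),
        (ρ g : V →ₗ[ℂ] V) w ∈ Submodule.span ℂ (Set.range vecs) := by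
      apply stab
      · exact stab_span (fun x hx => (hgen x hx).1)
      · exact stab_span (fun x hx => (hgen x hx).2.1)
      · exact stab_span (fun x hx => (hgen x hx).2.2)
    rcases hirr _ hWinv with hWbot | hWtop
    · exfalso
      have : vecs 0 ∈ (⊥ : Submodule ℂ V) := hWbot ▸ hmemW 0
      rw [Submodule.mem_bot] at this
      apply hv0
      simpa [hvecs_def] using this
    · have hcard := finrank_span_eq_card hind
      rw [hWtop] at hcard
      rw [finrank_top, Fintype.card_fin] at hcard
      exact hcard
  · -- F = ⊤ : the representation has dimension 1
    left
    have hav : ∀ x : V, a x = x := by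
      intro x
      exact ((hFmem x).mp (by rw [htop]; exact Submodule.mem_top)).1
    have hbv : ∀ x : V, b x = x := by
      intro x
      exact ((hFmem x).mp (by rw [htop]; exact Submodule.mem_top)).2
    obtain ⟨μ, hμ⟩ := Module.End.exists_eigenvalue t
    obtain ⟨v, hv⟩ := hμ.exists_hasEigenvector
    have hv0 : v ≠ 0 := hv.2
    have htv : t v = μ • v := hv.apply_eq_smul
    have hWinv : ∀ g : G369, ∀ w ∈ Submodule.span ℂ {v},
        (ρ g : V →ₗ[ℂ] V) w ∈ Submodule.span ℂ {v} := by
      apply stab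
      · intro w hw; rw [hav w]; exact hw
      · intro w hw; rw [hbv w]; exact hw
      · intro w hw
        obtain ⟨c, rfl⟩ := Submodule.mem_span_singleton.mp hw
        rw [map_smul, htv]
        exact Submodule.smul_mem _ _ (Submodule.smul_mem _ _
          (Submodule.mem_span_singleton_self v))
    rcases hirr _ hWinv with hWbot | hWtop
    · exfalso
      have : v ∈ (⊥ : Submodule ℂ V) := hWbot ▸ Submodule.mem_span_singleton_self v
      exact hv0 ((Submodule.mem_bot ℂ).mp this)
    · have h1 := finrank_span_singleton (K := ℂ) hv0
      rw [hWtop, finrank_top] at h1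
      exact h1
end

section
/- Let G be the semidirect product (ZMod 3 × ZMod 3) ⋊ ZMod 4, where the generator 1 of ZMod 4 acts by the automorphism (x, y) ↦ (−y, x). Then for every n ≤ 3 there is no injective group homomorphism from G into GL(n, ℂ); equivalently, every faithful complex representation of G has dimension at least 4. -/
open Matrix

private lemma idem_trace_nat {n : ℕ} {Q : Matrix (Fin n) (Fin n) ℂ} (h : Q * Q = Q) :
    ∃ k : ℕ, Q.trace = (k : ℂ) ∧ (Q.trace = 0 → Q = 0) := by
  set f := Matrix.toLin' Q with hfdef
  have hf : f ∘ₗ f = f := by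
    rw [hfdef, ← Matrix.toLin'_mul, h]
  obtain ⟨p, hp⟩ := (LinearMap.isProj_iff_isIdempotentElem f).mpr hf
  have htr : Q.trace = LinearMap.trace ℂ _ f := by
    rw [LinearMap.trace_eq_matrix_trace ℂ (Pi.basisFun ℂ (Fin n)) f]
    congr 1
    rw [LinearMap.toMatrix_eq_toMatrix', hfdef, LinearMap.toMatrix'_toLin']
  refine ⟨Module.finrank ℂ p, ?_, ?_⟩
  · rw [htr, hp.trace]
  · intro h0
    have hfr : Module.finrank ℂ p = 0 := by
      have : ((Module.finrank ℂ p : ℂ)) = 0 := by rw [← hp.trace, ← htr, h0]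
      exact_mod_cast this
    have hpbot : p = ⊥ := Submodule.finrank_eq_zero.mp hfr
    have hf0 : f = 0 := by
      apply LinearMap.ext
      intro v
      have hx := hp.map_mem v
      rw [hpbot, Submodule.mem_bot] at hx
      simpa using hx
    have : LinearMap.toMatrix' f = LinearMap.toMatrix' (0 : (Fin n → ℂ) →ₗ[ℂ] Fin n → ℂ) := by
      rw [hf0]
    rw [hfdef, LinearMap.toMatrix'_toLin'] at this
    rw [this, LinearEquiv.map_zero]

private lemma cube_sq_helper {n : ℕ} (X : Matrix (Fin n) (Fin n) ℂ) (hX : X * X * X = 1)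
    (a b : ℂ) :
    ((1 : Matrix (Fin n) (Fin n) ℂ) + a • X + b • (X * X)) * (1 + a • X + b • (X * X)) =
      (1 + 2*a*b) • (1 : Matrix (Fin n) (Fin n) ℂ) + (2*a + b*b) • X + (2*b + a*a) • (X * X) := by
  have h4 : (X*X) * (X*X) = X := by
    calc (X*X)*(X*X) = (X*X*X)*X := by noncomm_ring
    _ = X := by rw [hX, one_mul]
  have h3 : X * (X*X) = 1 := by rw [← mul_assoc]; exact hX
  simp only [mul_add, add_mul, one_mul, mul_one, smul_mul_assoc, mul_smul_comm, smul_smul,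
    hX, h4, h3]
  module

private lemma third_idem {n : ℕ} (X : Matrix (Fin n) (Fin n) ℂ) (hX : X * X * X = 1) {a b : ℂ}
    (h1 : 1 + 2*a*b = 3) (h2 : 2*a + b*b = 3*a) (h3 : 2*b + a*a = 3*b) :
    ((1/3:ℂ) • ((1:Matrix (Fin n) (Fin n) ℂ) + a • X + b • (X*X))) *
      ((1/3:ℂ) • ((1:Matrix (Fin n) (Fin n) ℂ) + a • X + b • (X*X))) =
      (1/3:ℂ) • ((1:Matrix (Fin n) (Fin n) ℂ) + a • X + b • (X*X)) := by
  rw [smul_mul_assoc, mul_smul_comm, cube_sq_helper X hX a b, h1, h2, h3, smul_smul]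
  match_scalars <;> ring

/-- key per-element lemma: a non-identity cube root of `1` in `GL_n(ℂ)`, `n ≤ 3`, whose
square has the same trace, has trace `n - 3`. -/
private lemma trace_eq_of_small {n : ℕ} (hn : n ≤ 3) {X : Matrix (Fin n) (Fin n) ℂ}
    (hX : X * X * X = 1) (htr2 : (X*X).trace = X.trace) (hX1 : X ≠ 1) :
    X.trace = (n : ℂ) - 3 := by
  have hprim := Complex.isPrimitiveRoot_exp 3 (by norm_num)
  set ω : ℂ := Complex.exp (2 * Real.pi * Complex.I / 3) with hωdef
  have hω3 : ω ^ 3 = 1 := hprim.pow_eq_one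
  have hωne : ω ≠ 1 := hprim.ne_one (by norm_num)
  have hsum : ω^2 + ω + 1 = 0 := by
    have hfac : (ω - 1) * (ω^2 + ω + 1) = 0 := by linear_combination hω3
    rcases mul_eq_zero.mp hfac with h | h
    · exact absurd (sub_eq_zero.mp h) hωne
    · exact h
  set τ : ℂ := X.trace with hτdef
  have htrace : ∀ a b : ℂ,
      ((1/3:ℂ) • ((1:Matrix (Fin n) (Fin n) ℂ) + a • X + b • (X*X))).trace = (1/3) * ((n:ℂ) + a*τ + b*τ) := by
    intro a b
    rw [trace_smul, trace_add, trace_add, trace_one, trace_smul, trace_smul, htr2]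
    simp only [smul_eq_mul, Fintype.card_fin]
    try ring
  -- the three idempotents
  have hQ : ((1/3:ℂ) • ((1:Matrix (Fin n) (Fin n) ℂ) + (ω^2) • X + ω • (X*X))) *
      ((1/3:ℂ) • ((1:Matrix (Fin n) (Fin n) ℂ) + (ω^2) • X + ω • (X*X))) =
      (1/3:ℂ) • ((1:Matrix (Fin n) (Fin n) ℂ) + (ω^2) • X + ω • (X*X)) :=
    third_idem X hX (by linear_combination 2*hω3) (by ring) (by linear_combination ω*hω3)
  have hQ' : ((1/3:ℂ) • ((1:Matrix (Fin n) (Fin n) ℂ) + ω • X + (ω^2) • (X*X))) *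
      ((1/3:ℂ) • ((1:Matrix (Fin n) (Fin n) ℂ) + ω • X + (ω^2) • (X*X))) =
      (1/3:ℂ) • ((1:Matrix (Fin n) (Fin n) ℂ) + ω • X + (ω^2) • (X*X)) :=
    third_idem X hX (by linear_combination 2*hω3) (by linear_combination ω*hω3) (by ring)
  have hP : ((1/3:ℂ) • ((1:Matrix (Fin n) (Fin n) ℂ) + (1:ℂ) • X + (1:ℂ) • (X*X))) *
      ((1/3:ℂ) • ((1:Matrix (Fin n) (Fin n) ℂ) + (1:ℂ) • X + (1:ℂ) • (X*X))) =
      (1/3:ℂ) • ((1:Matrix (Fin n) (Fin n) ℂ) + (1:ℂ) • X + (1:ℂ) • (X*X)) :=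
    third_idem X hX (by ring) (by ring) (by ring)
  obtain ⟨k, hk, hk0⟩ := idem_trace_nat hQ
  obtain ⟨r, hr, -⟩ := idem_trace_nat hP
  rw [htrace] at hk hr
  -- τ = n - 3k
  have hτval : τ = (n:ℂ) - 3 * k := by linear_combination τ*hsum - 3*hk
  -- r = n - 2k  (as naturals: r + 2k = n)
  have hcast : ((r + 2*k : ℕ) : ℂ) = (n : ℂ) := by
    push_cast
    linear_combination -hr + (2/3)*hτval
  have hrk : r + 2*k = n := by exact_mod_cast hcast
  -- k ≥ 1, otherwise X = 1
  have hkpos : 1 ≤ k := by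
    by_contra hklt
    have hk00 : k = 0 := by omega
    -- then Q and Q' vanish
    have hQ0 : (1/3:ℂ) • ((1:Matrix (Fin n) (Fin n) ℂ) + (ω^2) • X + ω • (X*X)) = 0 := by
      apply hk0
      rw [htrace, hk, hk00]
      norm_num
    obtain ⟨k', hk', hk0'⟩ := idem_trace_nat hQ'
    have hQ'0 : (1/3:ℂ) • ((1:Matrix (Fin n) (Fin n) ℂ) + ω • X + (ω^2) • (X*X)) = 0 := by
      apply hk0'
      rw [htrace]
      have h0 : (1/3) * ((n:ℂ) + ω^2*τ + ω*τ) = 0 := by rw [hk, hk00]; norm_num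
      linear_combination h0
    -- so P = 1 and X·P = P forces X = 1
    have hPone : (1/3:ℂ) • ((1:Matrix (Fin n) (Fin n) ℂ) + (1:ℂ) • X + (1:ℂ) • (X*X)) = 1 := by
      have expand : (1/3:ℂ) • ((1:Matrix (Fin n) (Fin n) ℂ) + (1:ℂ) • X + (1:ℂ) • (X*X))
          + (1/3:ℂ) • ((1:Matrix (Fin n) (Fin n) ℂ) + (ω^2) • X + ω • (X*X))
          + (1/3:ℂ) • ((1:Matrix (Fin n) (Fin n) ℂ) + ω • X + (ω^2) • (X*X)) = (1:Matrix (Fin n) (Fin n) ℂ) := by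
        match_scalars
        · ring
        · linear_combination hsum/3
        · linear_combination hsum/3
      rw [hQ0, hQ'0, add_zero, add_zero] at expand
      exact expand
    have hXP : X * ((1/3:ℂ) • ((1:Matrix (Fin n) (Fin n) ℂ) + (1:ℂ) • X + (1:ℂ) • (X*X)))
        = (1/3:ℂ) • ((1:Matrix (Fin n) (Fin n) ℂ) + (1:ℂ) • X + (1:ℂ) • (X*X)) := by
      rw [mul_smul_comm]
      congr 1
      simp only [one_smul, mul_add, mul_one]
      rw [← mul_assoc, hX]
      abel
    rw [hPone, mul_one] at hXP
    exact hX1 hXP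
  -- n ≤ 3 forces k = 1
  have hk1 : k = 1 := by omega
  rw [hτval, hk1]
  norm_num

private lemma grp3 : ∀ p : Multiplicative (ZMod 3 × ZMod 3), p * p * p = 1 := by decide

private lemma grp_sq_inv : ∀ p : Multiplicative (ZMod 3 × ZMod 3), p * p = p⁻¹ := by decide

private lemma phi2 : ∀ p : Multiplicative (ZMod 3 × ZMod 3),
    (zmodPowHom 4 rotAut rotAut_pow_four) (Multiplicative.ofAdd (2:ZMod 4)) p = p⁻¹ := by decide

/-- The group `(ZMod 3 × ZMod 3) ⋊ ZMod 4` (GAP ID `[36,9]`) admits no faithful complex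
representation of dimension at most 3: for every `n ≤ 3` there is no injective group
homomorphism into `GL(n, ℂ)`. -/
theorem no_faithful_small_rep_G369 (n : ℕ) (hn : n ≤ 3)
    (ρ : G369 →* Matrix.GeneralLinearGroup (Fin n) ℂ) :
    ¬ Function.Injective ρ := by
  intro hinj
  set f : Multiplicative (ZMod 3 × ZMod 3) → Matrix (Fin n) (Fin n) ℂ :=
    fun p => (ρ (SemidirectProduct.inl p) : Matrix (Fin n) (Fin n) ℂ) with hfdef
  have hmul : ∀ p q, f p * f q = f (p * q) := by
    intro p q
    rw [hfdef]
    simp only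
    rw [_root_.map_mul, _root_.map_mul, Units.val_mul]
  have hone : f 1 = 1 := by
    rw [hfdef]; simp only; rw [_root_.map_one, _root_.map_one, Units.val_one]
  have hXXX : ∀ p, f p * f p * f p = 1 := by
    intro p
    rw [hmul, hmul, grp3 p, hone]
  -- conjugation by inr 2 inverts the abelian part, so traces agree
  have hconj : ∀ p : Multiplicative (ZMod 3 × ZMod 3), (f p⁻¹).trace = (f p).trace := by
    intro p
    have key : (SemidirectProduct.inl p⁻¹ : G369)
        = SemidirectProduct.inr (Multiplicative.ofAdd (2:ZMod 4)) * SemidirectProduct.inl p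
          * SemidirectProduct.inr (Multiplicative.ofAdd (2:ZMod 4))⁻¹ := by
      rw [← phi2 p, SemidirectProduct.inl_aut]
    have : f p⁻¹ = (ρ (SemidirectProduct.inr (Multiplicative.ofAdd (2:ZMod 4))) :
          Matrix (Fin n) (Fin n) ℂ) * f p *
          ((ρ (SemidirectProduct.inr (Multiplicative.ofAdd (2:ZMod 4))))⁻¹ :
            Matrix.GeneralLinearGroup (Fin n) ℂ) := by
      rw [hfdef]
      simp only
      rw [key, _root_.map_mul, _root_.map_mul, Units.val_mul, Units.val_mul, _root_.map_inv SemidirectProduct.inr, _root_.map_inv ρ]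
    rw [this]
    exact Matrix.trace_units_conj (ρ (SemidirectProduct.inr (Multiplicative.ofAdd (2:ZMod 4)))) (f p)
  have htr2 : ∀ p, (f p * f p).trace = (f p).trace := by
    intro p
    rw [hmul, grp_sq_inv p]
    exact hconj p
  have hne : ∀ p : Multiplicative (ZMod 3 × ZMod 3), p ≠ 1 → f p ≠ 1 := by
    intro p hp h1
    apply hp
    have hu : ρ (SemidirectProduct.inl p) = 1 := Units.ext h1
    have h2 : SemidirectProduct.inl p = (1 : G369) := hinj (by rw [hu, _root_.map_one])
    have h3 : (SemidirectProduct.inl p : G369) = SemidirectProduct.inl 1 := by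
      rw [h2, _root_.map_one]
    exact SemidirectProduct.inl_injective h3
  have htr : ∀ p : Multiplicative (ZMod 3 × ZMod 3), p ≠ 1 → (f p).trace = (n:ℂ) - 3 :=
    fun p hp => trace_eq_of_small hn (hXXX p) (htr2 p) (hne p hp)
  -- the averaged projection onto invariants
  set R : Matrix (Fin n) (Fin n) ℂ := ∑ p : Multiplicative (ZMod 3 × ZMod 3), f p with hRdef
  have hRR : R * R = (9:ℂ) • R := by
    rw [hRdef, Finset.sum_mul_sum]
    have hrow : ∀ p : Multiplicative (ZMod 3 × ZMod 3), (∑ q, f p * f q) = R := by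
      intro p
      calc (∑ q, f p * f q) = ∑ q, f (p * q) := by
            exact Finset.sum_congr rfl fun q _ => hmul p q
      _ = ∑ q, f q := Equiv.sum_comp (Equiv.mulLeft p) (fun q => f q)
      _ = R := rfl
    rw [Finset.sum_congr rfl fun p _ => hrow p, Finset.sum_const]
    have hcard : (Finset.univ : Finset (Multiplicative (ZMod 3 × ZMod 3))).card = 9 := by decide
    rw [hcard, ← Nat.cast_smul_eq_nsmul ℂ]
    norm_num
    exact hRdef
  have hE : ((1/9:ℂ) • R) * ((1/9:ℂ) • R) = (1/9:ℂ) • R := by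
    rw [smul_mul_assoc, mul_smul_comm, hRR, smul_smul, smul_smul]
    norm_num
  obtain ⟨N, hN, -⟩ := idem_trace_nat hE
  have hRtr : R.trace = (n:ℂ) + 8 * ((n:ℂ) - 3) := by
    rw [hRdef, Matrix.trace_sum, ← Finset.add_sum_erase _ _ (Finset.mem_univ 1)]
    have h1 : (f 1).trace = (n:ℂ) := by
      rw [hone, Matrix.trace_one]
      simp
    have h2 : ∑ p ∈ Finset.univ.erase (1 : Multiplicative (ZMod 3 × ZMod 3)), (f p).trace
        = 8 * ((n:ℂ) - 3) := by
      rw [Finset.sum_congr rfl fun p hp => htr p (Finset.ne_of_mem_erase hp), Finset.sum_const]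
      have hcard : (Finset.univ.erase (1 : Multiplicative (ZMod 3 × ZMod 3))).card = 8 := by decide
      rw [hcard]
      simp [mul_comm]
    rw [h1, h2]
  rw [Matrix.trace_smul, hRtr, smul_eq_mul] at hN
  -- 9 N = 9 n - 24, impossible
  have hfin : ((9 * N + 24 : ℕ) : ℂ) = ((9 * n : ℕ) : ℂ) := by
    push_cast
    linear_combination -9 * hN
  have : 9 * N + 24 = 9 * n := by exact_mod_cast hfin
  omega
end
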